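/- Let Γ be a finite simplicial graph such that no induced subgraph of Γ is a square C₄ or a path with four vertices L₃. If Γ is connected, then Γ has a vertex v which is adjacent to every other vertex of Γ. -/

import Mathlib

/-- The cycle graph `C₄` on four vertices. -/
def cycleFour : SimpleGraph (Fin 4) :=
  SimpleGraph.fromRel (fun a b => b = a + 1)

/-- The path graph `L₃` on four vertices (a path of length 3). -/
def pathFour : SimpleGraph (Fin 4) :=
  SimpleGraph.fromRel (fun a b => (b : ℕ) = (a : ℕ) + 1)

/-- `Δ` occurs as an induced subgraph of `Γ`. -/
def HasInducedCopy {V W : Type*} (Γ : SimpleGraph V) (Δ : SimpleGraph W) : Prop :=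
  ∃ f : W ↪ V, ∀ a b : W, Γ.Adj (f a) (f b) ↔ Δ.Adj a b

lemma hasC4 {V : Type*} (Γ : SimpleGraph V) {a b c d : V}
    (hab : Γ.Adj a b) (hbc : Γ.Adj b c) (hcd : Γ.Adj c d) (hda : Γ.Adj d a)
    (hac : ¬ Γ.Adj a c) (hbd : ¬ Γ.Adj b d) (hac' : a ≠ c) (hbd' : b ≠ d) :
    HasInducedCopy Γ cycleFour := by
  have hca : ¬ Γ.Adj c a := fun h => hac h.symm
  have hdb : ¬ Γ.Adj d b := fun h => hbd h.symm
  refine ⟨⟨![a,b,c,d], ?_⟩, ?_⟩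
  · intro i j h
    fin_cases i <;> fin_cases j <;>
      simp_all [hab.ne, hbc.ne, hcd.ne, hda.ne, hab.ne', hbc.ne', hcd.ne', hda.ne']
  · intro i j
    change Γ.Adj (![a,b,c,d] i) (![a,b,c,d] j) ↔ _
    fin_cases i <;> fin_cases j <;>
      simp [cycleFour, SimpleGraph.fromRel_adj, hab, hbc, hcd, hda, hac, hbd,
        hab.symm, hbc.symm, hcd.symm, hda.symm, hca, hdb, Γ.irrefl, Function.Embedding.coeFn_mk]

lemma hasP4 {V : Type*} (Γ : SimpleGraph V) {a b c d : V}
    (hab : Γ.Adj a b) (hbc : Γ.Adj b c) (hcd : Γ.Adj c d)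
    (hac : ¬ Γ.Adj a c) (hbd : ¬ Γ.Adj b d) (had : ¬ Γ.Adj a d)
    (hac' : a ≠ c) (hbd' : b ≠ d) (had' : a ≠ d) :
    HasInducedCopy Γ pathFour := by
  have hca : ¬ Γ.Adj c a := fun h => hac h.symm
  have hdb : ¬ Γ.Adj d b := fun h => hbd h.symm
  have hda : ¬ Γ.Adj d a := fun h => had h.symm
  refine ⟨⟨![a,b,c,d], ?_⟩, ?_⟩
  · intro i j h
    fin_cases i <;> fin_cases j <;>
      simp_all [hab.ne, hbc.ne, hcd.ne, hab.ne', hbc.ne', hcd.ne']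
  · intro i j
    change Γ.Adj (![a,b,c,d] i) (![a,b,c,d] j) ↔ _
    fin_cases i <;> fin_cases j <;>
      simp [pathFour, SimpleGraph.fromRel_adj, hab, hbc, hcd, hac, hbd, had,
        hab.symm, hbc.symm, hcd.symm, hca, hdb, hda, Γ.irrefl, Function.Embedding.coeFn_mk]
        <;> decide

theorem stmt_0 {V : Type*} [Fintype V] (Γ : SimpleGraph V)
    (hC4 : ¬ HasInducedCopy Γ cycleFour) (hL3 : ¬ HasInducedCopy Γ pathFour)
    (hconn : Γ.Connected) :
    ∃ v : V, ∀ u : V, u ≠ v → Γ.Adj v u := by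
  classical
  have hne : Nonempty V := hconn.nonempty
  obtain ⟨v, -, hmax⟩ := Finset.exists_max_image Finset.univ
    (fun w => (Γ.neighborFinset w).card) Finset.univ_nonempty
  have key : ∀ w u, Γ.Adj v w → Γ.Adj w u → ¬ Γ.Adj v u → u ≠ v → False := by
    intro w u hvw hwu hvu huv
    have hx : ∃ x, Γ.Adj v x ∧ ¬ Γ.Adj w x ∧ x ≠ w := by
      by_contra h
      push_neg at h
      have hsub : insert u (insert v ((Γ.neighborFinset v).erase w)) ⊆
          Γ.neighborFinset w := by
        intro x hx
        simp only [Finset.mem_insert, Finset.mem_erase,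
          SimpleGraph.mem_neighborFinset] at hx ⊢
        rcases hx with rfl | rfl | ⟨hxw, hvx⟩
        · exact hwu
        · exact hvw.symm
        · by_contra hwx
          exact hxw (h x hvx hwx)
      have hcard := Finset.card_le_card hsub
      have huvne : u ≠ v := huv
      have hunin : u ∉ insert v ((Γ.neighborFinset v).erase w) := by
        simp only [Finset.mem_insert, Finset.mem_erase,
          SimpleGraph.mem_neighborFinset]
        push_neg
        exact ⟨huvne, fun _ hx => hvu hx⟩
      have hvnin : v ∉ (Γ.neighborFinset v).erase w := by
        simp [SimpleGraph.mem_neighborFinset]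
      have hwmem : w ∈ Γ.neighborFinset v := by
        simp [SimpleGraph.mem_neighborFinset, hvw]
      rw [Finset.card_insert_of_notMem hunin, Finset.card_insert_of_notMem hvnin,
        Finset.card_erase_of_mem hwmem] at hcard
      have h1 : 1 ≤ (Γ.neighborFinset v).card := Finset.card_pos.2 ⟨w, hwmem⟩
      have h2 := hmax w (Finset.mem_univ w)
      omega
    obtain ⟨x, hvx, hwx, hxw⟩ := hx
    have hxu : x ≠ u := fun h => hvu (h ▸ hvx)
    by_cases hux : Γ.Adj u x
    · exact hC4 (hasC4 Γ hvw hwu hux hvx.symm hvu hwx (Ne.symm huv) hxw.symm)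
    · exact hL3 (hasP4 Γ hvx.symm hvw hwu (fun h => hwx h.symm) hvu
        (fun h => hux h.symm) hxw (Ne.symm huv) hxu)
  have step : ∀ a b : V, (a = v ∨ Γ.Adj v a) → Γ.Adj a b → (b = v ∨ Γ.Adj v b) := by
    intro a b ha hab
    by_cases hbv : b = v
    · exact Or.inl hbv
    by_cases hvb : Γ.Adj v b
    · exact Or.inr hvb
    rcases ha with rfl | hva
    · exact absurd hab hvb
    · exact (key a b hva hab hvb hbv).elim
  have walkP : ∀ {a b : V}, Γ.Walk a b → (a = v ∨ Γ.Adj v a) → (b = v ∨ Γ.Adj v b) := by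
    intro a b p
    induction p with
    | nil => exact id
    | cons h _ ih => exact fun ha => ih (step _ _ ha h)
  refine ⟨v, fun u hu => ?_⟩
  obtain ⟨p⟩ := hconn v u
  rcases walkP p (Or.inl rfl) with rfl | h
  · exact absurd rfl hu
  · exact h
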